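/- arXiv:2008.13055 — 2 statements merged into one kernel-verified Lean document; each statement's English description precedes it below -/
import Mathlib

section
/- Let R = ℂ[x_0,…,x_n] be a polynomial ring, let I ⊆ R be an ideal, and let w ∈ ℤ^{n+1} be a weight. Then the quotient ring R[t]/J is flat as a module over the polynomial ring ℂ[t], where J ⊆ R[t] is the ideal generated by {f_t : f ∈ I, f ≠ 0}; moreover, the image of J under the evaluation homomorphism R[t] → R sending t ↦ 0 equals the initial ideal I_w := span{f_w : f ∈ I, f ≠ 0}, while its image under t ↦ 1 equals I. (This is the flatness of the weight degeneration 𝒳^w → ℂ_t, whose fiber at t = 0 is the scheme with ideal I_w.) -/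
open MvPolynomial

/-- `w(f) = min { w·α : α in the support of f }` (junk value `0` for `f = 0`). -/
noncomputable def wval {m : ℕ} (w : Fin m → ℤ) (f : MvPolynomial (Fin m) ℂ) : ℤ :=
  if h : f.support.Nonempty then f.support.inf' h (fun α => ∑ i, w i * (α i : ℤ)) else 0

/-- The initial form `f_w`: the sum of the terms `c_α x^α` of `f` with `w·α = w(f)`. -/
noncomputable def initialForm {m : ℕ} (w : Fin m → ℤ) (f : MvPolynomial (Fin m) ℂ) :
    MvPolynomial (Fin m) ℂ :=
  ∑ α ∈ f.support.filter (fun α => (∑ i, w i * (α i : ℤ)) = wval w f),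
    monomial α (coeff α f)

/-- `f_t = Σ_α c_α x^α t^(w·α − w(f))`, an element of `ℂ[t][x_0,…,x_{m-1}]`. -/
noncomputable def degenerate {m : ℕ} (w : Fin m → ℤ) (f : MvPolynomial (Fin m) ℂ) :
    MvPolynomial (Fin m) (Polynomial ℂ) :=
  ∑ α ∈ f.support,
    monomial α (Polynomial.C (coeff α f) *
      Polynomial.X ^ ((∑ i, w i * (α i : ℤ)) - wval w f).toNat)


noncomputable section

variable {m : ℕ} (w : Fin m → ℤ)

def wdeg (α : Fin m →₀ ℕ) : ℤ := ∑ i, w i * (α i : ℤ)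

lemma wdeg_add (α β : Fin m →₀ ℕ) : wdeg w (α + β) = wdeg w α + wdeg w β := by
  simp only [wdeg, Finsupp.coe_add, Pi.add_apply]
  push_cast
  rw [← Finset.sum_add_distrib]
  congr 1; ext i; ring

def tslice (e : ℤ) (q : Polynomial ℂ) : Polynomial ℂ :=
  if 0 ≤ e then Polynomial.C (q.coeff e.toNat) * Polynomial.X ^ e.toNat else 0

lemma tslice_zero (e : ℤ) : tslice e (0 : Polynomial ℂ) = 0 := by simp [tslice]

lemma tslice_add (e : ℤ) (q q' : Polynomial ℂ) :
    tslice e (q + q') = tslice e q + tslice e q' := by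
  simp only [tslice]
  split <;> simp [add_mul]

end

noncomputable section
open Polynomial
variable {m : ℕ} (w : Fin m → ℤ)

abbrev R' (m : ℕ) := MvPolynomial (Fin m) (Polynomial ℂ)

def wcomp (d : ℤ) (F : R' m) : R' m :=
  ∑ α ∈ F.support, monomial α (tslice (wdeg w α - d) (coeff α F))

lemma coeff_wcomp (d : ℤ) (F : R' m) (β : Fin m →₀ ℕ) :
    coeff β (wcomp w d F) = tslice (wdeg w β - d) (coeff β F) := by
  rw [wcomp, MvPolynomial.coeff_sum]
  simp only [MvPolynomial.coeff_monomial]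
  rw [Finset.sum_ite_eq' F.support β (fun α => tslice (wdeg w α - d) (coeff α F))]
  split
  · rfl
  · rw [(MvPolynomial.notMem_support_iff.mp (by assumption) : coeff β F = 0), tslice_zero]

lemma tslice_coeff_ne_zero {e : ℤ} {q : Polynomial ℂ} {j : ℕ}
    (h : (tslice e q).coeff j ≠ 0) : 0 ≤ e ∧ (j : ℤ) = e ∧ q.coeff j ≠ 0 := by
  unfold tslice at h
  split at h
  · simp only [Polynomial.coeff_C_mul, Polynomial.coeff_X_pow] at h
    by_cases hj : j = e.toNat
    · subst hj
      rw [if_pos rfl, mul_one] at h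
      exact ⟨by assumption, by omega, h⟩
    · simp [hj] at h
  · simp at h

lemma exists_coeff_ne_zero {q : Polynomial ℂ} (h : q ≠ 0) : ∃ j, q.coeff j ≠ 0 := by
  by_contra hc
  push_neg at hc
  exact h (Polynomial.ext fun j => by simp [hc j])

def Homog (e : ℤ) (F : R' m) : Prop :=
  ∀ (α : Fin m →₀ ℕ) (j : ℕ), (coeff α F).coeff j ≠ 0 → wdeg w α - (j : ℤ) = e

lemma homog_wcomp (d : ℤ) (F : R' m) : Homog w d (wcomp w d F) := by
  intro α j hj
  rw [coeff_wcomp] at hj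
  obtain ⟨h1, h2, _⟩ := tslice_coeff_ne_zero hj
  omega

lemma coeff_eq_tslice_of_homog {e : ℤ} {F : R' m} (hF : Homog w e F) (α : Fin m →₀ ℕ) :
    coeff α F = tslice (wdeg w α - e) (coeff α F) := by
  refine Polynomial.ext fun j => ?_
  unfold tslice
  by_cases hj : (coeff α F).coeff j = 0
  · rw [hj]
    split
    · simp only [Polynomial.coeff_C_mul, Polynomial.coeff_X_pow]
      by_cases h : j = (wdeg w α - e).toNat
      · rw [if_pos h, mul_one, ← h, hj]
      · rw [if_neg h, mul_zero]
    · simp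
  · have := hF α j hj
    have hk : (wdeg w α - e).toNat = j := by omega
    rw [if_pos (by omega)]
    simp [Polynomial.coeff_C_mul, Polynomial.coeff_X_pow, hk]

lemma wcomp_self_of_homog {e : ℤ} {F : R' m} (hF : Homog w e F) : wcomp w e F = F := by
  apply MvPolynomial.ext; intro β
  rw [coeff_wcomp, ← coeff_eq_tslice_of_homog w hF]

lemma wcomp_of_homog_ne {e d : ℤ} {F : R' m} (hF : Homog w e F) (hd : d ≠ e) :
    wcomp w d F = 0 := by
  apply MvPolynomial.ext; intro β
  rw [coeff_wcomp, MvPolynomial.coeff_zero]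
  refine Polynomial.ext fun j => ?_
  rw [Polynomial.coeff_zero]
  by_contra h
  obtain ⟨h1, h2, h3⟩ := tslice_coeff_ne_zero h
  have := hF β j h3
  omega

lemma wcomp_add (d : ℤ) (F G : R' m) :
    wcomp w d (F + G) = wcomp w d F + wcomp w d G := by
  apply MvPolynomial.ext; intro β
  simp only [coeff_wcomp, MvPolynomial.coeff_add, tslice_add]

lemma wcomp_zero (d : ℤ) : wcomp w d (0 : R' m) = 0 := by
  apply MvPolynomial.ext; intro β
  simp only [coeff_wcomp, MvPolynomial.coeff_zero, tslice_zero]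

def wcompHom (d : ℤ) : R' m →+ R' m :=
  { toFun := wcomp w d, map_zero' := wcomp_zero w d, map_add' := wcomp_add w d }

def degSupp (F : R' m) : Finset ℤ :=
  F.support.biUnion (fun α => (coeff α F).support.image (fun j : ℕ => wdeg w α - (j : ℤ)))

lemma wcomp_eq_zero_of_not_mem {F : R' m} {d : ℤ} (hd : d ∉ degSupp w F) :
    wcomp w d F = 0 := by
  apply MvPolynomial.ext; intro β
  rw [coeff_wcomp, MvPolynomial.coeff_zero]
  refine Polynomial.ext fun j => ?_
  rw [Polynomial.coeff_zero]
  by_contra h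
  obtain ⟨h1, h2, h3⟩ := tslice_coeff_ne_zero h
  apply hd
  refine Finset.mem_biUnion.mpr ⟨β, mem_support_iff.mpr (fun hc => h3 (by rw [hc]; simp)), ?_⟩
  exact Finset.mem_image.mpr ⟨j, Polynomial.mem_support_iff.mpr h3, by omega⟩

lemma sum_wcomp {F : R' m} {D : Finset ℤ} (hD : degSupp w F ⊆ D) :
    ∑ d ∈ D, wcomp w d F = F := by
  apply MvPolynomial.ext; intro β
  rw [MvPolynomial.coeff_sum]
  simp only [coeff_wcomp]
  by_cases hq0 : coeff β F = 0
  · simp [hq0, tslice_zero]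
  · have hβ : β ∈ F.support := mem_support_iff.mpr hq0
    have hsub : (coeff β F).support.image (fun j : ℕ => wdeg w β - (j : ℤ)) ⊆ D := by
      intro d hd
      exact hD (Finset.mem_biUnion.mpr ⟨β, hβ, hd⟩)
    rw [← Finset.sum_subset hsub]
    · have hinj : Set.InjOn (fun j : ℕ => wdeg w β - (j : ℤ)) (coeff β F).support := by
        intro a _ b _ hab; simp only at hab; omega
      rw [Finset.sum_image hinj]
      conv_rhs => rw [(coeff β F).as_sum_support]
      refine Finset.sum_congr rfl (fun j hj => ?_)
      unfold tslice
      have hT : (wdeg w β - (wdeg w β - (j:ℤ))).toNat = j := by omega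
      rw [if_pos (by omega), hT, Polynomial.C_mul_X_pow_eq_monomial]
    · intro d _ hd
      by_contra h
      apply hd
      obtain ⟨j, hj⟩ := exists_coeff_ne_zero h
      obtain ⟨h1, h2, h3⟩ := tslice_coeff_ne_zero hj
      exact Finset.mem_image.mpr ⟨j, Polynomial.mem_support_iff.mpr h3, by omega⟩

end


noncomputable section
variable {m : ℕ} (w : Fin m → ℤ)

lemma wval_le {f : MvPolynomial (Fin m) ℂ} {α : Fin m →₀ ℕ} (h : α ∈ f.support) :
    wval w f ≤ wdeg w α := by
  rw [wval, dif_pos ⟨α, h⟩]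
  exact Finset.inf'_le _ h

lemma le_wval {f : MvPolynomial (Fin m) ℂ} {e : ℤ} (hf : f ≠ 0)
    (h : ∀ α ∈ f.support, e ≤ wdeg w α) : e ≤ wval w f := by
  rw [wval, dif_pos (MvPolynomial.support_nonempty.mpr hf)]
  exact Finset.le_inf' _ _ h

lemma coeff_degenerate (f : MvPolynomial (Fin m) ℂ) (β : Fin m →₀ ℕ) :
    coeff β (degenerate w f)
      = Polynomial.C (coeff β f) * Polynomial.X ^ ((wdeg w β - wval w f).toNat) := by
  rw [degenerate, MvPolynomial.coeff_sum]
  simp only [MvPolynomial.coeff_monomial]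
  rw [Finset.sum_ite_eq' f.support β]
  split
  · rfl
  · rw [(MvPolynomial.notMem_support_iff.mp (by assumption) : coeff β f = 0), map_zero, zero_mul]

noncomputable section
variable {m : ℕ} (w : Fin m → ℤ)

lemma homog_degenerate (f : MvPolynomial (Fin m) ℂ) : Homog w (wval w f) (degenerate w f) := by
  intro α j hj
  rw [coeff_degenerate] at hj
  simp only [Polynomial.coeff_C_mul, Polynomial.coeff_X_pow] at hj
  by_cases h : j = (wdeg w α - wval w f).toNat
  · subst h
    rw [if_pos rfl, mul_one] at hj
    have hα : α ∈ f.support := MvPolynomial.mem_support_iff.mpr (fun hc => hj (by rw [hc]))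
    have := wval_le w hα
    omega
  · rw [if_neg h, mul_zero] at hj
    exact absurd rfl hj

def tsliceHom (e : ℤ) : Polynomial ℂ →+ Polynomial ℂ :=
  { toFun := tslice e, map_zero' := tslice_zero e, map_add' := tslice_add e }

lemma tslice_sum {ι : Type*} (e : ℤ) (s : Finset ι) (f : ι → Polynomial ℂ) :
    tslice e (∑ i ∈ s, f i) = ∑ i ∈ s, tslice e (f i) :=
  map_sum (tsliceHom e) f s

lemma tslice_mul_single {q2 : Polynomial ℂ} {c : ℤ}
    (hq2 : ∀ j : ℕ, q2.coeff j ≠ 0 → (j : ℤ) = c) (q1 : Polynomial ℂ) (a : ℤ) :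
    tslice (a + c) (q1 * q2) = tslice a q1 * q2 := by
  by_cases h2 : q2 = 0
  · rw [h2, mul_zero, mul_zero, tslice_zero]
  · obtain ⟨j2, hj2⟩ := exists_coeff_ne_zero h2
    have hj2c : (j2 : ℤ) = c := hq2 j2 hj2
    have hq2eq : q2 = Polynomial.C (q2.coeff j2) * Polynomial.X ^ j2 := by
      refine Polynomial.ext fun j => ?_
      simp only [Polynomial.coeff_C_mul, Polynomial.coeff_X_pow]
      by_cases hj : j = j2
      · subst hj; rw [if_pos rfl, mul_one]
      · rw [if_neg hj, mul_zero]
        by_contra hne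
        exact hj (by have := hq2 j hne; omega)
    subst hj2c
    set cc := q2.coeff j2 with hcc
    rw [hq2eq]
    unfold tslice
    by_cases ha : 0 ≤ a
    · rw [if_pos (by omega), if_pos ha]
      have hT : (a + (j2:ℤ)).toNat = a.toNat + j2 := by omega
      rw [hT]
      have hco : (q1 * (Polynomial.C cc * Polynomial.X ^ j2)).coeff (a.toNat + j2)
          = q1.coeff a.toNat * cc := by
        rw [show q1 * (Polynomial.C cc * Polynomial.X ^ j2)
              = (q1 * Polynomial.C cc) * Polynomial.X ^ j2 by ring,
            Polynomial.coeff_mul_X_pow, Polynomial.coeff_mul_C]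
      rw [hco, pow_add, map_mul]
      ring
    · rw [if_neg ha, zero_mul]
      by_cases hb : 0 ≤ a + (j2 : ℤ)
      · rw [if_pos hb]
        have hco : (q1 * (Polynomial.C cc * Polynomial.X ^ j2)).coeff ((a + (j2:ℤ)).toNat) = 0 := by
          rw [show q1 * (Polynomial.C cc * Polynomial.X ^ j2)
                = (q1 * Polynomial.C cc) * Polynomial.X ^ j2 by ring,
              Polynomial.coeff_mul_X_pow']
          rw [if_neg (by omega)]
        rw [hco, map_zero, zero_mul]
      · rw [if_neg hb]

lemma wcomp_mul_homog {e : ℤ} {G : R' m} (hG : Homog w e G) (H : R' m) (d : ℤ) :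
    wcomp w d (H * G) = wcomp w (d - e) H * G := by
  apply MvPolynomial.ext; intro β
  rw [coeff_wcomp, MvPolynomial.coeff_mul, MvPolynomial.coeff_mul, tslice_sum]
  refine Finset.sum_congr rfl fun x hx => ?_
  have hsum : x.1 + x.2 = β := Finset.HasAntidiagonal.mem_antidiagonal.mp hx
  rw [coeff_wcomp]
  have hidx : wdeg w β - d = (wdeg w x.1 - (d - e)) + (wdeg w x.2 - e) := by
    rw [← hsum, wdeg_add]; ring
  rw [hidx]
  exact tslice_mul_single (fun j hj => by have := hG x.2 j hj; omega) _ _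

lemma homog_C_single (c : ℂ) (j : ℕ) :
    Homog w (-(j : ℤ)) ((MvPolynomial.C (Polynomial.C c * Polynomial.X ^ j)) : R' m) := by
  intro α j' hj'
  rw [MvPolynomial.coeff_C] at hj'
  by_cases hα : (0 : Fin m →₀ ℕ) = α
  · rw [if_pos hα] at hj'
    simp only [Polynomial.coeff_C_mul, Polynomial.coeff_X_pow] at hj'
    have hj : j' = j := by
      by_contra h
      rw [if_neg h] at hj'
      exact hj' (mul_zero c)
    subst hj
    have : wdeg w α = 0 := by
      rw [← hα]; simp [wdeg]
    omega
  · rw [if_neg hα] at hj'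
    simp at hj'

end

noncomputable section
variable {m : ℕ} (w : Fin m → ℤ)

lemma ev1_degenerate (f : MvPolynomial (Fin m) ℂ) :
    MvPolynomial.map (Polynomial.evalRingHom (1 : ℂ)) (degenerate w f) = f := by
  apply MvPolynomial.ext; intro β
  rw [MvPolynomial.coeff_map, coeff_degenerate]
  simp [Polynomial.coe_evalRingHom]

lemma ev0_degenerate (f : MvPolynomial (Fin m) ℂ) :
    MvPolynomial.map (Polynomial.evalRingHom (0 : ℂ)) (degenerate w f) = initialForm w f := by
  apply MvPolynomial.ext; intro β
  rw [MvPolynomial.coeff_map, coeff_degenerate]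
  rw [initialForm, MvPolynomial.coeff_sum]
  simp only [MvPolynomial.coeff_monomial]
  rw [Finset.sum_ite_eq' (f.support.filter (fun α => (∑ i, w i * (α i : ℤ)) = wval w f)) β]
  simp only [Polynomial.coe_evalRingHom, Polynomial.eval_mul, Polynomial.eval_C,
    Polynomial.eval_pow, Polynomial.eval_X]
  by_cases hβ : β ∈ f.support
  · have hle := wval_le w hβ
    by_cases heq : wdeg w β = wval w f
    · have h0 : (wdeg w β - wval w f).toNat = 0 := by omega
      rw [h0, pow_zero, mul_one, if_pos]
      exact Finset.mem_filter.mpr ⟨hβ, heq⟩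
    · have h0 : (wdeg w β - wval w f).toNat ≠ 0 := by omega
      rw [zero_pow h0, mul_zero, if_neg]
      intro hc
      exact heq (Finset.mem_filter.mp hc).2
  · rw [MvPolynomial.notMem_support_iff.mp hβ, zero_mul, if_neg]
    intro hc
    exact hβ (Finset.mem_filter.mp hc).1

end

noncomputable section
variable {m : ℕ} (w : Fin m → ℤ) (I : Ideal (MvPolynomial (Fin m) ℂ))

def degSet : Set (R' m) := {g | ∃ f ∈ I, f ≠ 0 ∧ g = degenerate w f}

lemma span_ev1 :
    Ideal.map (MvPolynomial.map (Polynomial.evalRingHom (1 : ℂ))) (Ideal.span (degSet w I)) = I := by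
  rw [Ideal.map_span]
  apply le_antisymm
  · rw [Ideal.span_le]
    rintro g ⟨x, ⟨f, hf, hf0, rfl⟩, rfl⟩
    rw [ev1_degenerate]
    exact hf
  · intro f hf
    by_cases hf0 : f = 0
    · subst hf0; exact Ideal.zero_mem _
    · exact Ideal.subset_span ⟨degenerate w f, ⟨f, hf, hf0, rfl⟩, ev1_degenerate w f⟩

lemma ev1_mem {F : R' m} (hF : F ∈ Ideal.span (degSet w I)) :
    MvPolynomial.map (Polynomial.evalRingHom (1 : ℂ)) F ∈ I :=
  span_ev1 w I ▸ Ideal.mem_map_of_mem _ hF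

lemma homog_mem_span {e : ℤ} {G : R' m} (hG : Homog w e G)
    (h1 : MvPolynomial.map (Polynomial.evalRingHom (1 : ℂ)) G ∈ I) :
    G ∈ Ideal.span (degSet w I) := by
  by_cases hG0 : G = 0
  · subst hG0; exact Ideal.zero_mem _
  set f := MvPolynomial.map (Polynomial.evalRingHom (1 : ℂ)) G with hf
  have hcoef : ∀ α, coeff α G = Polynomial.C (coeff α f) * Polynomial.X ^ ((wdeg w α - e).toNat) := by
    intro α
    have hq := coeff_eq_tslice_of_homog w hG α
    have hfα : coeff α f = Polynomial.eval 1 (coeff α G) := by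
      rw [hf, MvPolynomial.coeff_map]; rfl
    rw [tslice] at hq
    split at hq
    · rw [hfα]
      conv_lhs => rw [hq]
      rw [hq]
      simp
    · rw [hfα, hq]
      simp
  have hsupp : ∀ α, coeff α f ≠ 0 ↔ coeff α G ≠ 0 := by
    intro α
    constructor
    · intro h hc
      apply h
      rw [hf, MvPolynomial.coeff_map, hc]
      simp
    · intro h hc
      apply h
      rw [hcoef α, hc]
      simp
  have hf0 : f ≠ 0 := by
    obtain ⟨α, hα⟩ := MvPolynomial.ne_zero_iff.mp hG0
    exact fun hc => (hsupp α).mpr hα (by rw [hc]; simp)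
  have he : e ≤ wval w f := by
    refine le_wval w hf0 (fun α hα => ?_)
    have hGα : coeff α G ≠ 0 := (hsupp α).mp (MvPolynomial.mem_support_iff.mp hα)
    obtain ⟨j, hj⟩ := exists_coeff_ne_zero hGα
    have := hG α j hj
    omega
  have key : G = (MvPolynomial.C (Polynomial.X ^ ((wval w f - e).toNat)) : R' m) * degenerate w f := by
    apply MvPolynomial.ext; intro β
    rw [MvPolynomial.coeff_C_mul, coeff_degenerate, hcoef β]
    by_cases hβ : β ∈ f.support
    · have h1' := wval_le w hβ
      have h2' : (wdeg w β - e).toNat = (wval w f - e).toNat + (wdeg w β - wval w f).toNat := by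
        omega
      rw [h2', pow_add]
      ring
    · rw [MvPolynomial.notMem_support_iff.mp hβ]
      simp
  rw [key]
  exact Ideal.mul_mem_left _ _ (Ideal.subset_span ⟨f, h1, hf0, rfl⟩)
end

noncomputable section
variable {m : ℕ} (w : Fin m → ℤ) (I : Ideal (MvPolynomial (Fin m) ℂ))

lemma wcomp_sub (d : ℤ) (F G : R' m) : wcomp w d (F - G) = wcomp w d F - wcomp w d G :=
  map_sub (wcompHom w d) F G

lemma wcomp_sum {ι : Type*} (d : ℤ) (s : Finset ι) (f : ι → R' m) :
    wcomp w d (∑ i ∈ s, f i) = ∑ i ∈ s, wcomp w d (f i) :=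
  map_sum (wcompHom w d) f s

lemma wcomp_mem_span {F : R' m} (hF : F ∈ Ideal.span (degSet w I)) (d : ℤ) :
    wcomp w d F ∈ Ideal.span (degSet w I) := by
  induction hF using Submodule.span_induction generalizing d with
  | mem x hx =>
      obtain ⟨f, hf, hf0, rfl⟩ := hx
      rcases eq_or_ne d (wval w f) with h | h
      · rw [h, wcomp_self_of_homog w (homog_degenerate w f)]
        exact Ideal.subset_span ⟨f, hf, hf0, rfl⟩
      · rw [wcomp_of_homog_ne w (homog_degenerate w f) h]
        exact Ideal.zero_mem _
  | zero => rw [wcomp_zero]; exact Ideal.zero_mem _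
  | add x y hx hy ihx ihy => rw [wcomp_add]; exact Ideal.add_mem _ (ihx d) (ihy d)
  | smul a x hx ih =>
      rw [smul_eq_mul]
      have hdecomp : a * x = ∑ e ∈ degSupp w x, a * wcomp w e x := by
        rw [← Finset.mul_sum, sum_wcomp w (subset_rfl)]
      rw [hdecomp, wcomp_sum]
      refine Ideal.sum_mem _ (fun e _ => ?_)
      show wcomp w d (a * wcomp w e x) ∈ _
      rw [wcomp_mul_homog w (homog_wcomp w e x) a d]
      exact Ideal.mul_mem_left _ _ (ih e)

lemma torsion_aux : ∀ (N : ℕ) (D : Finset ℤ), D.card = N →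
    ∀ (p : Polynomial ℂ), p ≠ 0 → ∀ F : R' m, (∀ d ∉ D, wcomp w d F = 0) →
    MvPolynomial.C p * F ∈ Ideal.span (degSet w I) → F ∈ Ideal.span (degSet w I) := by
  intro N
  induction N with
  | zero =>
      intro D hD p hp F hF hmem
      have hD0 : D = ∅ := Finset.card_eq_zero.mp hD
      have hF0 : F = 0 := by
        rw [← sum_wcomp w (subset_rfl : degSupp w F ⊆ degSupp w F)]
        exact Finset.sum_eq_zero fun d _ => hF d (by rw [hD0]; exact Finset.notMem_empty d)
      rw [hF0]
      exact Ideal.zero_mem _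
  | succ N ih =>
      intro D hD p hp F hF hmem
      have hne : D.Nonempty := Finset.card_pos.mp (by omega)
      set d0 := D.max' hne with hd0
      by_cases h0 : wcomp w d0 F = 0
      · refine ih (D.erase d0) (by rw [Finset.card_erase_of_mem (D.max'_mem hne), hD]; rfl) p hp F
          (fun d hd => ?_) hmem
        rcases eq_or_ne d d0 with rfl | hdne
        · exact h0
        · exact hF d (fun hdD => hd (Finset.mem_erase.mpr ⟨hdne, hdD⟩))
      · set j0 := p.natTrailingDegree with hj0
        set c := p.coeff j0 with hc
        have hc0 : c ≠ 0 := by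
          rw [hc, hj0, ← Polynomial.trailingCoeff]
          exact Polynomial.trailingCoeff_nonzero_iff_nonzero.mpr hp
        have hterm : ∀ j ∈ p.support,
            wcomp w (d0 - (j0:ℤ)) (MvPolynomial.C (Polynomial.monomial j (p.coeff j)) * F)
            = if j = j0 then MvPolynomial.C (Polynomial.C c * Polynomial.X ^ j0) * wcomp w d0 F
              else 0 := by
          intro j hj
          rw [← Polynomial.C_mul_X_pow_eq_monomial,
            mul_comm (MvPolynomial.C (Polynomial.C (p.coeff j) * Polynomial.X ^ j)) F,
            wcomp_mul_homog w (homog_C_single w (p.coeff j) j) F (d0 - j0)]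
          rcases eq_or_ne j j0 with rfl | hjne
          · rw [if_pos rfl]
            have hrw : d0 - (j0:ℤ) - (-(j0:ℤ)) = d0 := by ring
            rw [hrw, mul_comm, ← hc]
          · rw [if_neg hjne]
            have hjge : j0 ≤ j := Polynomial.natTrailingDegree_le_of_mem_supp j hj
            rw [hF _ (fun hdD => by have := D.le_max' _ hdD; omega), zero_mul]
        have claimA : wcomp w (d0 - j0) (MvPolynomial.C p * F)
            = MvPolynomial.C (Polynomial.C c * Polynomial.X ^ j0) * wcomp w d0 F := by
          conv_lhs => rw [p.as_sum_support]
          rw [map_sum (MvPolynomial.C : Polynomial ℂ →+* R' m), Finset.sum_mul, wcomp_sum]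
          rw [Finset.sum_congr rfl hterm, Finset.sum_ite_eq' p.support j0,
            if_pos (Polynomial.natTrailingDegree_mem_support_of_nonzero hp)]
        have hT : MvPolynomial.C (Polynomial.C c * Polynomial.X ^ j0) * wcomp w d0 F
            ∈ Ideal.span (degSet w I) := claimA ▸ wcomp_mem_span w I hmem (d0 - j0)
        have hTev : MvPolynomial.map (Polynomial.evalRingHom (1:ℂ))
              (MvPolynomial.C (Polynomial.C c * Polynomial.X ^ j0) * wcomp w d0 F)
            = MvPolynomial.C c * MvPolynomial.map (Polynomial.evalRingHom (1:ℂ)) (wcomp w d0 F) := by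
          rw [map_mul, MvPolynomial.map_C]
          simp [Polynomial.coe_evalRingHom]
        have hIc : MvPolynomial.C c * MvPolynomial.map (Polynomial.evalRingHom (1:ℂ)) (wcomp w d0 F) ∈ I :=
          hTev ▸ ev1_mem w I hT
        have hIf : MvPolynomial.map (Polynomial.evalRingHom (1:ℂ)) (wcomp w d0 F) ∈ I := by
          have h2 := I.mul_mem_left (MvPolynomial.C c⁻¹) hIc
          rwa [← mul_assoc, ← map_mul, inv_mul_cancel₀ hc0, map_one, one_mul] at h2
        have hJ0 : wcomp w d0 F ∈ Ideal.span (degSet w I) :=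
          homog_mem_span w I (homog_wcomp w d0 F) hIf
        have hmem' : MvPolynomial.C p * (F - wcomp w d0 F) ∈ Ideal.span (degSet w I) := by
          rw [mul_sub]
          exact Ideal.sub_mem _ hmem (Ideal.mul_mem_left _ _ hJ0)
        have hF' : ∀ d ∉ D.erase d0, wcomp w d (F - wcomp w d0 F) = 0 := by
          intro d hd
          rw [wcomp_sub]
          rcases eq_or_ne d d0 with rfl | hdne
          · rw [wcomp_self_of_homog w (homog_wcomp w d0 F), sub_self]
          · rw [hF d (fun hdD => hd (Finset.mem_erase.mpr ⟨hdne, hdD⟩)),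
              wcomp_of_homog_ne w (homog_wcomp w d0 F) hdne, sub_zero]
        have := ih (D.erase d0)
          (by rw [Finset.card_erase_of_mem (D.max'_mem hne), hD]; rfl) p hp _ hF' hmem'
        have hfin : F = (F - wcomp w d0 F) + wcomp w d0 F := by ring
        rw [hfin]
        exact Ideal.add_mem _ this hJ0

lemma torsion_free_span {p : Polynomial ℂ} (hp : p ≠ 0) {F : R' m}
    (h : MvPolynomial.C p * F ∈ Ideal.span (degSet w I)) : F ∈ Ideal.span (degSet w I) :=
  torsion_aux w I (degSupp w F).card (degSupp w F) rfl p hp F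
    (fun _ hd => wcomp_eq_zero_of_not_mem w hd) h

end

open TensorProduct in
theorem flat_of_torsionfree {R M : Type*} [CommRing R] [IsDomain R] [IsPrincipalIdealRing R]
    [AddCommGroup M] [Module R M]
    (h : ∀ (p : R) (m : M), p ≠ 0 → p • m = 0 → m = 0) : Module.Flat R M := by
  rw [Module.Flat.iff_lift_lsmul_comp_subtype_injective]
  intro I _
  obtain ⟨p, hp⟩ := (IsPrincipalIdealRing.principal I).1
  subst hp
  have hpI : p ∈ Ideal.span {p} := Ideal.mem_span_singleton_self p
  have key : ∀ z : (Ideal.span {p} : Ideal R) ⊗[R] M, ∃ m : M, z = ⟨p, hpI⟩ ⊗ₜ[R] m := by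
    intro z
    induction z with
    | zero => exact ⟨0, by simp⟩
    | tmul x m =>
        obtain ⟨q, hq⟩ := Ideal.mem_span_singleton'.mp x.2
        refine ⟨q • m, ?_⟩
        have : x = q • (⟨p, hpI⟩ : (Ideal.span {p} : Ideal R)) := by
          ext; simpa [mul_comm] using hq.symm
        rw [this, smul_tmul]
    | add a b ha hb =>
        obtain ⟨ma, rfl⟩ := ha
        obtain ⟨mb, rfl⟩ := hb
        exact ⟨ma + mb, (TensorProduct.tmul_add _ _ _).symm⟩
  rw [injective_iff_map_eq_zero]
  intro z hz
  obtain ⟨mm, rfl⟩ := key z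
  simp only [TensorProduct.lift.tmul, LinearMap.coe_comp, Function.comp_apply,
    Submodule.coe_subtype, LinearMap.lsmul_apply] at hz
  by_cases hp0 : p = 0
  · subst hp0
    have : (⟨(0:R), hpI⟩ : (Ideal.span {(0:R)} : Ideal R)) = 0 := rfl
    rw [this, TensorProduct.zero_tmul]
  · rw [h p mm hp0 hz, TensorProduct.tmul_zero]

theorem weight_degeneration_flat (n : ℕ) (I : Ideal (MvPolynomial (Fin (n + 1)) ℂ))
    (w : Fin (n + 1) → ℤ)
    (J : Ideal (MvPolynomial (Fin (n + 1)) (Polynomial ℂ)))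
    (hJ : J = Ideal.span {g | ∃ f ∈ I, f ≠ 0 ∧ g = degenerate w f}) :
    Module.Flat (Polynomial ℂ) (MvPolynomial (Fin (n + 1)) (Polynomial ℂ) ⧸ J) ∧
    Ideal.map (MvPolynomial.map (Polynomial.evalRingHom (0 : ℂ))) J
      = Ideal.span {g | ∃ f ∈ I, f ≠ 0 ∧ g = initialForm w f} ∧
    Ideal.map (MvPolynomial.map (Polynomial.evalRingHom (1 : ℂ))) J = I := by
  have hset : {g | ∃ f ∈ I, f ≠ 0 ∧ g = degenerate w f} = degSet w I := rfl
  rw [hset] at hJ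
  subst hJ
  refine ⟨?_, ?_, ?_⟩
  · apply flat_of_torsionfree
    intro p x hp hx
    obtain ⟨F, rfl⟩ := Ideal.Quotient.mk_surjective x
    have hsm : p • (Ideal.Quotient.mk (Ideal.span (degSet w I)) F)
        = Ideal.Quotient.mk _ (MvPolynomial.C p * F) := by
      rw [← MvPolynomial.smul_eq_C_mul]
      rfl
    rw [hsm, Ideal.Quotient.eq_zero_iff_mem] at hx
    rw [Ideal.Quotient.eq_zero_iff_mem]
    exact torsion_free_span w I hp hx
  · rw [Ideal.map_span]
    congr 1
    ext g
    simp only [Set.mem_image, degSet, Set.mem_setOf_eq]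
    constructor
    · rintro ⟨x, ⟨f, hf, hf0, rfl⟩, rfl⟩
      exact ⟨f, hf, hf0, ev0_degenerate w f⟩
    · rintro ⟨f, hf, hf0, rfl⟩
      exact ⟨degenerate w f, ⟨f, hf, hf0, rfl⟩, ev0_degenerate w f⟩
  · exact span_ev1 w I
end
end

section
/- Let 𝒜 : ℤ^{n+1} → ℤ^{d+1} be a surjective group homomorphism and let p ∈ (ℂ^×)^{n+1}. Define φ_{p,𝒜} : (ℂ^×)^{d+1} → (ℂ^×)^{n+1} by (φ_{p,𝒜}(t))_i = p_i · ∏_k t_k^{𝒜_{k,i}}, where 𝒜_{k,i} are the entries of the matrix of 𝒜 (whose i-th column is 𝒜(e_i)). Then the image of φ_{p,𝒜} equals the set { x ∈ (ℂ^×)^{n+1} : x^u = p^u for every u ∈ ker 𝒜 }, where x^u := ∏_i x_i^{u_i} ∈ ℂ^×. (This is the claim that the character equations c_u = p^u for u ∈ ker(𝒜) define 𝒳_0 ∩ 𝕋 as a subvariety of the torus, i.e., they cut out exactly the torus of the translated toric variety p.X_𝒜.) -/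
private lemma zpow_finset_sum {G : Type*} [CommGroup G] (a : G) {ι : Type*}
    (s : Finset ι) (f : ι → ℤ) : a ^ (∑ i ∈ s, f i) = ∏ i ∈ s, a ^ f i := by
  classical
  induction s using Finset.induction with
  | empty => simp
  | insert _ _ h ih => simp [Finset.sum_insert h, Finset.prod_insert h, zpow_add, ih]

private lemma map_eq_sum_single {n d : ℕ} (𝒜 : (Fin (n + 1) → ℤ) →+ (Fin (d + 1) → ℤ))
    (u : Fin (n + 1) → ℤ) : 𝒜 u = ∑ i, u i • 𝒜 (Pi.single i 1) := by
  conv_lhs => rw [← Finset.univ_sum_single u]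
  rw [map_sum]
  refine Finset.sum_congr rfl fun i _ => ?_
  rw [← map_zsmul]
  congr 1
  funext j
  by_cases h : j = i <;> simp [Pi.single_apply, h, mul_comm]

theorem torus_of_translated_toric_variety_cut_out_by_characters
    {n d : ℕ} (𝒜 : (Fin (n + 1) → ℤ) →+ (Fin (d + 1) → ℤ))
    (hsurj : Function.Surjective 𝒜) (p : Fin (n + 1) → ℂˣ) :
    Set.range (fun t : Fin (d + 1) → ℂˣ =>
        (fun i => p i * ∏ k, t k ^ 𝒜 (Pi.single i 1) k : Fin (n + 1) → ℂˣ)) =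
      {x : Fin (n + 1) → ℂˣ | ∀ u : Fin (n + 1) → ℤ, 𝒜 u = 0 →
        ∏ i, x i ^ u i = ∏ i, p i ^ u i} := by
  ext x
  constructor
  · rintro ⟨t, rfl⟩ u hu
    simp only
    have : ∀ i : Fin (n + 1),
        (p i * ∏ k, t k ^ 𝒜 (Pi.single i 1) k) ^ u i
          = p i ^ u i * ∏ k, t k ^ (𝒜 (Pi.single i 1) k * u i) := by
      intro i
      rw [mul_zpow, ← Finset.prod_zpow]
      congr 1
      exact Finset.prod_congr rfl fun k _ => by rw [← zpow_mul]
    rw [Finset.prod_congr rfl fun i _ => this i, Finset.prod_mul_distrib]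
    have h2 : (∏ i, ∏ k, t k ^ (𝒜 (Pi.single i 1) k * u i)) = 1 := by
      rw [Finset.prod_comm]
      refine Finset.prod_eq_one fun k _ => ?_
      have : ∀ i : Fin (n + 1), t k ^ (𝒜 (Pi.single i 1) k * u i)
          = t k ^ ((u i • 𝒜 (Pi.single i 1)) k) := by
        intro i; congr 1; simp [mul_comm]
      rw [Finset.prod_congr rfl fun i _ => this i, ← zpow_finset_sum]
      have : (∑ i, (u i • 𝒜 (Pi.single i 1)) k) = 𝒜 u k := by
        rw [map_eq_sum_single 𝒜 u]
        simp
      rw [this, hu]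
      simp
    rw [h2, mul_one]
  · intro hx
    -- choose preimages of the standard basis vectors
    choose w hw using fun k : Fin (d + 1) => hsurj (Pi.single k 1)
    set c : Fin (n + 1) → ℂˣ := fun i => x i * (p i)⁻¹ with hc
    have hker : ∀ u : Fin (n + 1) → ℤ, 𝒜 u = 0 → (∏ i, c i ^ u i) = 1 := by
      intro u hu
      have := hx u hu
      calc (∏ i, c i ^ u i) = (∏ i, x i ^ u i) * (∏ i, p i ^ u i)⁻¹ := by
            rw [← Finset.prod_inv_distrib, ← Finset.prod_mul_distrib]
            exact Finset.prod_congr rfl fun i _ => by rw [mul_zpow, inv_zpow]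
        _ = 1 := by rw [this, mul_inv_cancel]
    refine ⟨fun k => ∏ j, c j ^ w k j, ?_⟩
    funext i
    have key : (∏ k, (∏ j, c j ^ w k j) ^ 𝒜 (Pi.single i 1) k) = c i := by
      have h1 : (∏ k, (∏ j, c j ^ w k j) ^ 𝒜 (Pi.single i 1) k)
          = ∏ j, c j ^ (∑ k, 𝒜 (Pi.single i 1) k * w k j) := by
        have e1 : ∀ k : Fin (d + 1), (∏ j, c j ^ w k j) ^ 𝒜 (Pi.single i 1) k
            = ∏ j, c j ^ (𝒜 (Pi.single i 1) k * w k j) := by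
          intro k
          rw [← Finset.prod_zpow]
          exact Finset.prod_congr rfl fun j _ => by rw [← zpow_mul, mul_comm]
        rw [Finset.prod_congr rfl fun k _ => e1 k, Finset.prod_comm]
        exact Finset.prod_congr rfl fun j _ => (zpow_finset_sum _ _ _).symm
      rw [h1]
      -- the exponent vector is s(𝒜 eᵢ) which differs from eᵢ by an element of ker 𝒜
      set v : Fin (n + 1) → ℤ := fun j => ∑ k, 𝒜 (Pi.single i 1) k * w k j with hv
      have hAv : 𝒜 v = 𝒜 (Pi.single i 1) := by
        have : v = ∑ k, 𝒜 (Pi.single i 1) k • w k := by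
          funext j; simp [hv, Finset.sum_apply]
        rw [this, map_sum]
        have : ∀ k : Fin (d + 1), 𝒜 (𝒜 (Pi.single i 1) k • w k)
            = Pi.single k (𝒜 (Pi.single i 1) k) := by
          intro k
          rw [map_zsmul, hw k]
          funext j
          by_cases h : j = k <;> simp [Pi.single_apply, h, mul_comm]
        rw [Finset.sum_congr rfl fun k _ => this k, Finset.univ_sum_single]
      have hker' := hker (v - Pi.single i 1) (by rw [map_sub, hAv, sub_self])
      have expand : (∏ j, c j ^ ((v - Pi.single i 1 : Fin (n+1) → ℤ)) j)
          = (∏ j, c j ^ v j) * (∏ j, c j ^ (Pi.single i 1 : Fin (n+1) → ℤ) j)⁻¹ := by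
        rw [← Finset.prod_inv_distrib, ← Finset.prod_mul_distrib]
        refine Finset.prod_congr rfl fun j _ => ?_
        rw [← zpow_neg, ← zpow_add, Pi.sub_apply, sub_eq_add_neg]
      have hsingle : (∏ j, c j ^ (Pi.single i 1 : Fin (n+1) → ℤ) j) = c i := by
        rw [Finset.prod_eq_single i (fun j _ hj => by simp [Pi.single_apply, hj])
          (by simp)]
        simp
      rw [expand, hsingle] at hker'
      have := mul_eq_one_iff_eq_inv.mp hker'
      rw [this, inv_inv]
    calc p i * ∏ k, (∏ j, c j ^ w k j) ^ 𝒜 (Pi.single i 1) k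
        = p i * c i := by rw [key]
      _ = x i := by rw [hc]; simp [mul_comm]
end
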